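/- The Lasso fit map y ↦ A·x̂_λ(A,y) is 1-Lipschitz with respect to the Euclidean norm: for all y, y' in R^M, ‖A·x̂_λ(A,y) − A·x̂_λ(A,y')‖ ≤ ‖y − y'‖. -/

import Mathlib

noncomputable def l2norm {M : ℕ} (v : Fin M → ℝ) : ℝ := Real.sqrt (∑ i, (v i) ^ 2)

noncomputable def lassoObj {M N : ℕ} (A : Matrix (Fin M) (Fin N) ℝ)
    (y : Fin M → ℝ) (lam : ℝ) (x : Fin N → ℝ) : ℝ :=
  (1 / 2) * (l2norm (A.mulVec x - y)) ^ 2 + M * lam * ∑ j, |x j|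

lemma lasso_aux_small (a b : ℝ) (hb : 0 ≤ b)
    (h : ∀ t : ℝ, 0 < t → t ≤ 1 → 0 ≤ t * a + t ^ 2 * b) : 0 ≤ a := by
  by_contra h'
  push_neg at h'
  rcases eq_or_lt_of_le hb with hb0 | hb0
  · have := h 1 one_pos le_rfl; nlinarith
  · set t := min 1 (-a / (2 * b)) with ht
    have ht0 : 0 < t := lt_min one_pos (div_pos (by linarith) (by linarith))
    have ht1 : t ≤ 1 := min_le_left _ _
    have h2 : t ≤ -a / (2 * b) := min_le_right _ _
    have h3 : t * b ≤ -a / 2 := by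
      calc t * b ≤ (-a / (2 * b)) * b := by nlinarith
        _ = -a / 2 := by field_simp
    have h4 := h t ht0 ht1
    nlinarith

lemma lasso_sq (v : Fin M → ℝ) : l2norm v ^ 2 = ∑ i, (v i) ^ 2 := by
  unfold l2norm
  exact Real.sq_sqrt (by positivity)

lemma lasso_key {M N : ℕ} (A : Matrix (Fin M) (Fin N) ℝ) (lam : ℝ) (hlam : 0 ≤ lam)
    (y : Fin M → ℝ) (x x' : Fin N → ℝ)
    (hx : ∀ z, lassoObj A y lam x ≤ lassoObj A y lam z) :
    0 ≤ (∑ i, (A.mulVec x - y) i * (A.mulVec x' - A.mulVec x) i)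
        + M * lam * ((∑ j, |x' j|) - ∑ j, |x j|) := by
  set d : Fin N → ℝ := x' - x with hd
  have hAd : A.mulVec x' - A.mulVec x = A.mulVec d := by
    rw [hd, Matrix.mulVec_sub]
  rw [hAd]
  apply lasso_aux_small _ ((1/2) * ∑ i, (A.mulVec d i) ^ 2) (by positivity)
  intro t ht0 ht1
  have hz := hx (x + t • d)
  unfold lassoObj at hz
  rw [lasso_sq, lasso_sq] at hz
  have hmv : A.mulVec (x + t • d) - y = fun i => (A.mulVec x - y) i + t * A.mulVec d i := by
    funext i
    simp [Matrix.mulVec_add, Matrix.mulVec_smul, Pi.smul_apply, smul_eq_mul]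
    ring
  rw [hmv] at hz
  have hexp : ∑ i, ((A.mulVec x - y) i + t * A.mulVec d i) ^ 2
      = (∑ i, ((A.mulVec x - y) i) ^ 2)
        + 2 * t * (∑ i, (A.mulVec x - y) i * A.mulVec d i)
        + t ^ 2 * ∑ i, (A.mulVec d i) ^ 2 := by
    rw [Finset.mul_sum, Finset.mul_sum, ← Finset.sum_add_distrib, ← Finset.sum_add_distrib]
    apply Finset.sum_congr rfl
    intro i _
    ring
  rw [hexp] at hz
  have hl1 : ∑ j, |(x + t • d) j| ≤ (1 - t) * (∑ j, |x j|) + t * ∑ j, |x' j| := by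
    rw [Finset.mul_sum, Finset.mul_sum, ← Finset.sum_add_distrib]
    apply Finset.sum_le_sum
    intro j _
    have : (x + t • d) j = (1 - t) * x j + t * x' j := by
      simp [hd, Pi.smul_apply, smul_eq_mul]
      ring
    rw [this]
    calc |(1 - t) * x j + t * x' j| ≤ |(1 - t) * x j| + |t * x' j| := abs_add_le _ _
      _ = (1 - t) * |x j| + t * |x' j| := by
          rw [abs_mul, abs_mul, abs_of_nonneg (by linarith), abs_of_nonneg (le_of_lt ht0)]
  have hM : (0:ℝ) ≤ (M : ℝ) * lam := by positivity
  nlinarith [mul_le_mul_of_nonneg_left hl1 hM]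

theorem lasso_fit_lipschitz {M N : ℕ} (A : Matrix (Fin M) (Fin N) ℝ) (lam : ℝ)
    (hlam : 0 < lam) (y y' : Fin M → ℝ) (x x' : Fin N → ℝ)
    (hx : ∀ z, lassoObj A y lam x ≤ lassoObj A y lam z)
    (hx' : ∀ z, lassoObj A y' lam x' ≤ lassoObj A y' lam z) :
    l2norm (A.mulVec x - A.mulVec x') ≤ l2norm (y - y') := by
  have h1 := lasso_key A lam hlam.le y x x' hx
  have h2 := lasso_key A lam hlam.le y' x' x hx'
  set u := A.mulVec x
  set u' := A.mulVec x'
  -- combine the two variational inequalities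
  have hsum : ∑ i, (u - u') i ^ 2 ≤ ∑ i, (y - y') i * (u - u') i := by
    have e1 : ∑ i, (u - y) i * (u' - u) i + ∑ i, (u' - y') i * (u - u') i
        = -(∑ i, (u - u') i ^ 2) + ∑ i, (y - y') i * (u - u') i := by
      rw [← Finset.sum_add_distrib, ← Finset.sum_neg_distrib, ← Finset.sum_add_distrib]
      apply Finset.sum_congr rfl
      intro i _
      simp only [Pi.sub_apply]
      ring
    nlinarith [e1]
  have hcs := Finset.sum_mul_sq_le_sq_mul_sq Finset.univ (fun i => (y - y') i)
      (fun i => (u - u') i)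
  have hnn : (0:ℝ) ≤ ∑ i, (u - u') i ^ 2 := by positivity
  have hnn2 : (0:ℝ) ≤ ∑ i, (y - y') i ^ 2 := by positivity
  have hfinal : ∑ i, (u - u') i ^ 2 ≤ ∑ i, (y - y') i ^ 2 := by
    nlinarith [hsum, hcs, hnn, hnn2]
  unfold l2norm
  exact Real.sqrt_le_sqrt hfinal
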